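/- Let p ≥ 3 be a prime and let E ⊆ GL_3(F_p) be the subgroup generated by g = I + E_12 + E_23 and h = I + E_13. Then E is an elementary abelian p-group of order p²; the normalizer of E in GL_3(F_p) equals the set of invertible upper-triangular matrices (a b c; 0 d e; 0 0 f) satisfying af = d²; this normalizer has order p³(p−1)²; and the number of GL_3(F_p)-conjugates of E is (p²+p+1)(p+1)(p−1). -/

import Mathlib

open Matrix

set_option linter.unnecessarySeqFocus false
set_option maxRecDepth 20000

namespace GL3HAux

variable {p : ℕ} [Fact p.Prime]

def mkMat (a c : ZMod p) : Matrix (Fin 3) (Fin 3) (ZMod p) := !![1,a,c;0,1,a;0,0,1]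

lemma mkMat_mul (a c a' c' : ZMod p) :
    mkMat a c * mkMat a' c' = mkMat (a+a') (c+c'+a*a') := by
  ext i j
  fin_cases i <;> fin_cases j <;>
    simp [mkMat, Matrix.mul_apply, Fin.sum_univ_three, Matrix.vecHead, Matrix.vecTail] <;> ring

def mk (a c : ZMod p) : GL (Fin 3) (ZMod p) :=
  ⟨mkMat a c, mkMat (-a) (a^2 - c),
    by rw [mkMat_mul]; ext i j; fin_cases i <;> fin_cases j <;> simp [mkMat, Matrix.vecHead, Matrix.vecTail] <;> ring,
    by rw [mkMat_mul]; ext i j; fin_cases i <;> fin_cases j <;> simp [mkMat, Matrix.vecHead, Matrix.vecTail] <;> ring⟩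

lemma mk_val (a c : ZMod p) : (mk a c).val = mkMat a c := rfl

lemma mk_mul (a c a' c' : ZMod p) : mk a c * mk a' c' = mk (a+a') (c+c'+a*a') :=
  Units.ext (mkMat_mul a c a' c')

lemma mk_inv (a c : ZMod p) : (mk a c)⁻¹ = mk (-a) (a^2 - c) := Units.ext rfl

lemma mk_zero_zero : (mk 0 0 : GL (Fin 3) (ZMod p)) = 1 := by
  apply Units.ext
  rw [mk_val]
  ext i j
  fin_cases i <;> fin_cases j <;>
    simp [mkMat, Matrix.one_apply, Matrix.vecHead, Matrix.vecTail]

def E0 (p : ℕ) [Fact p.Prime] : Subgroup (GL (Fin 3) (ZMod p)) where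
  carrier := {x | ∃ a c : ZMod p, x = mk a c}
  one_mem' := ⟨0, 0, mk_zero_zero.symm⟩
  mul_mem' := by
    rintro x y ⟨a, c, rfl⟩ ⟨a', c', rfl⟩
    exact ⟨a + a', c + c' + a*a', mk_mul a c a' c'⟩
  inv_mem' := by
    rintro x ⟨a, c, rfl⟩
    exact ⟨-a, a^2 - c, mk_inv a c⟩

lemma mem_E0 {x : GL (Fin 3) (ZMod p)} : x ∈ E0 p ↔ ∃ a c : ZMod p, x = mk a c := Iff.rfl

lemma mk_comm (a c a' c' : ZMod p) : mk a c * mk a' c' = mk a' c' * mk a c := by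
  rw [mk_mul, mk_mul]; congr 1 <;> ring

lemma mk_zero_pow (c : ZMod p) (n : ℕ) : mk 0 c ^ n = mk 0 ((n : ZMod p) * c) := by
  induction n with
  | zero => simp [mk_zero_zero]
  | succ n ih => rw [pow_succ, ih, mk_mul]; push_cast; congr 1 <;> ring

lemma mk_pow (a : ZMod p) (n : ℕ) :
    ∃ c : ZMod p, mk a 0 ^ n = mk ((n : ZMod p) * a) c ∧ 2 * c = ((n * (n-1) : ℕ) : ZMod p) * a^2 := by
  induction n with
  | zero => exact ⟨0, by simp [mk_zero_zero], by simp⟩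
  | succ n ih =>
    obtain ⟨c, hc, h2⟩ := ih
    refine ⟨c + n * a * a, ?_, ?_⟩
    · rw [pow_succ, hc, mk_mul]; push_cast; congr 1 <;> ring
    · have key : ((n+1) * n : ℕ) = (n * (n-1) + 2*n : ℕ) := by
        cases n with
        | zero => rfl
        | succ m => simp [Nat.succ_sub_one]; ring
      rw [Nat.add_sub_cancel, key]
      push_cast at h2 ⊢
      linear_combination h2

lemma twoNeZeroZMod (hp3 : 3 ≤ p) : (2 : ZMod p) ≠ 0 := by
  have : ((2 : ℕ) : ZMod p) ≠ 0 := by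
    rw [Ne, ZMod.natCast_eq_zero_iff]
    intro hdvd
    have := Nat.le_of_dvd (by norm_num) hdvd
    omega
  simpa using this

lemma mk_pow_p (hp3 : 3 ≤ p) (a c : ZMod p) : mk a c ^ p = 1 := by
  have hx : mk a c = mk a 0 * mk 0 c := by rw [mk_mul]; congr 1 <;> ring
  have hcomm : Commute (mk a 0) (mk 0 c) := mk_comm a 0 0 c
  rw [hx, hcomm.mul_pow, mk_zero_pow]
  obtain ⟨d, hd, h2⟩ := mk_pow a p
  have hp0 : ((p : ℕ) : ZMod p) = 0 := ZMod.natCast_self p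
  have hd0 : d = 0 := by
    have : (2 : ZMod p) * d = 0 := by
      rw [h2]; push_cast; rw [hp0]; ring
    exact (mul_eq_zero.mp this).resolve_left (twoNeZeroZMod hp3)
  rw [hd, hd0, hp0, zero_mul, zero_mul, mk_zero_zero, one_mul]

lemma closure_eq_E0 {g h : GL (Fin 3) (ZMod p)}
    (hg : (g : Matrix (Fin 3) (Fin 3) (ZMod p)) = !![1, 1, 0; 0, 1, 1; 0, 0, 1])
    (hh : (h : Matrix (Fin 3) (Fin 3) (ZMod p)) = !![1, 0, 1; 0, 1, 0; 0, 0, 1]) :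
    Subgroup.closure {g, h} = E0 p := by
  have hg' : g = mk 1 0 := Units.ext (by rw [hg]; rfl)
  have hh' : h = mk 0 1 := Units.ext (by rw [hh]; rfl)
  apply le_antisymm
  · rw [Subgroup.closure_le]
    rintro x (rfl | rfl)
    · exact ⟨1, 0, hg'⟩
    · exact ⟨0, 1, hh'⟩
  · rintro x ⟨a, c, rfl⟩
    obtain ⟨c', hc', -⟩ := mk_pow (1 : ZMod p) a.val
    have hgen : mk a c = g ^ a.val * h ^ (c - c').val := by
      rw [hg', hh', hc', mk_zero_pow, mk_mul]
      have hv : ((a.val : ℕ) : ZMod p) = a := by simp [ZMod.natCast_val, ZMod.cast_id]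
      have hv2 : (((c - c').val : ℕ) : ZMod p) = c - c' := by simp [ZMod.natCast_val, ZMod.cast_id]
      rw [hv, hv2]
      congr 1 <;> ring
    rw [hgen]
    exact mul_mem (pow_mem (Subgroup.subset_closure (by simp)) _)
      (pow_mem (Subgroup.subset_closure (by simp)) _)

lemma mkMat_entries (a c : ZMod p) :
    mkMat a c 0 1 = a ∧ mkMat a c 0 2 = c := by
  constructor <;> simp [mkMat]

noncomputable def E0Equiv : (E0 p) ≃ (ZMod p × ZMod p) where
  toFun x := (x.1.val 0 1, x.1.val 0 2)
  invFun q := ⟨mk q.1 q.2, ⟨q.1, q.2, rfl⟩⟩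
  left_inv := by
    rintro ⟨x, a, c, rfl⟩
    simp only [mk_val]
    ext : 1 <;> simp [mkMat]
  right_inv := by
    rintro ⟨a, c⟩
    simp [mk_val, mkMat]

lemma card_E0 : Nat.card (E0 p) = p ^ 2 := by
  rw [Nat.card_congr (E0Equiv (p := p)), Nat.card_prod, Nat.card_zmod]
  ring

def T (p : ℕ) [Fact p.Prime] : Set (GL (Fin 3) (ZMod p)) :=
  {x | (x : Matrix (Fin 3) (Fin 3) (ZMod p)) 1 0 = 0 ∧
       (x : Matrix (Fin 3) (Fin 3) (ZMod p)) 2 0 = 0 ∧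
       (x : Matrix (Fin 3) (Fin 3) (ZMod p)) 2 1 = 0 ∧
       (x : Matrix (Fin 3) (Fin 3) (ZMod p)) 0 0 *
           (x : Matrix (Fin 3) (Fin 3) (ZMod p)) 2 2 =
         (x : Matrix (Fin 3) (Fin 3) (ZMod p)) 1 1 ^ 2}

lemma det_isUnit (x : GL (Fin 3) (ZMod p)) : IsUnit (x.val.det) :=
  (Matrix.isUnit_iff_isUnit_det _).mp ⟨x, rfl⟩

lemma diag_ne_zero {x : GL (Fin 3) (ZMod p)} (hx : x ∈ T p) :
    x.val 0 0 ≠ 0 ∧ x.val 1 1 ≠ 0 ∧ x.val 2 2 ≠ 0 := by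
  obtain ⟨h10, h20, h21, hcon⟩ := hx
  have hdet := (det_isUnit x).ne_zero
  rw [Matrix.det_fin_three] at hdet
  refine ⟨fun h0 => hdet ?_, fun h0 => hdet ?_, fun h0 => hdet ?_⟩ <;>
    · rw [show (x : Matrix (Fin 3) (Fin 3) (ZMod p)) = x.val from rfl] at h10 h20 h21
      rw [h10, h20, h21, h0]; ring

lemma conj_mem_E0 {x : GL (Fin 3) (ZMod p)} (hx : x ∈ T p) (a c : ZMod p) :
    x * mk a c * x⁻¹ ∈ E0 p := by
  obtain ⟨h10, h20, h21, hcon⟩ := hx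
  obtain ⟨hA, hD, hF⟩ := diag_ne_zero ⟨h10, h20, h21, hcon⟩
  set A := x.val 0 0 with hAdef
  set B := x.val 0 1
  set C := x.val 0 2
  set D := x.val 1 1
  set Ee := x.val 1 2
  set F := x.val 2 2
  refine ⟨a * A * D⁻¹, (a * B + c * A - a * A * D⁻¹ * Ee) * F⁻¹, ?_⟩
  have key : x.val * mkMat a c = mkMat (a * A * D⁻¹) ((a * B + c * A - a * A * D⁻¹ * Ee) * F⁻¹) * x.val := by
    ext i j
    rw [show (x : Matrix (Fin 3) (Fin 3) (ZMod p)) = x.val from rfl] at h10 h20 h21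
    fin_cases i <;> fin_cases j <;>
      simp [mkMat, Matrix.mul_apply, Fin.sum_univ_three, Matrix.vecHead, Matrix.vecTail,
        h10, h20, h21] <;>
      field_simp <;> (first | ring1 | linear_combination (-a) * hcon | linear_combination a * hcon)
  have : x * mk a c = mk (a * A * D⁻¹) ((a * B + c * A - a * A * D⁻¹ * Ee) * F⁻¹) * x :=
    Units.ext key
  rw [mul_inv_eq_iff_eq_mul]
  exact this

lemma inv_mem_T {x : GL (Fin 3) (ZMod p)} (hx : x ∈ T p) : x⁻¹ ∈ T p := by
  obtain ⟨h10, h20, h21, hcon⟩ := hx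
  obtain ⟨hA, hD, hF⟩ := diag_ne_zero ⟨h10, h20, h21, hcon⟩
  rw [show (x : Matrix (Fin 3) (Fin 3) (ZMod p)) = x.val from rfl] at h10 h20 h21 hcon
  have hXY : x.val * (x.val)⁻¹ = 1 := Matrix.mul_nonsing_inv _ (det_isUnit x)
  have e20 := congrFun (congrFun hXY 2) 0
  have e21 := congrFun (congrFun hXY 2) 1
  have e22 := congrFun (congrFun hXY 2) 2
  have e10 := congrFun (congrFun hXY 1) 0
  have e11 := congrFun (congrFun hXY 1) 1
  have e00 := congrFun (congrFun hXY 0) 0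
  simp [Matrix.mul_apply, Fin.sum_univ_three, Matrix.one_apply, h10, h20, h21]
    at e20 e21 e22 e10 e11 e00
  have y20 : (x.val)⁻¹ 2 0 = 0 := e20.resolve_left hF
  have y21 : (x.val)⁻¹ 2 1 = 0 := e21.resolve_left hF
  have y10 : (x.val)⁻¹ 1 0 = 0 := by
    rw [y20, mul_zero, add_zero] at e10
    rcases mul_eq_zero.mp e10 with hh | hh
    · exact absurd hh hD
    · exact hh
  rw [y21, mul_zero, add_zero] at e11
  rw [y10, y20, mul_zero, mul_zero, add_zero, add_zero] at e00
  have key : (x.val)⁻¹ 0 0 * (x.val)⁻¹ 2 2 = (x.val)⁻¹ 1 1 ^ 2 := by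
    have hAF : x.val 0 0 * x.val 2 2 ≠ 0 := mul_ne_zero hA hF
    apply mul_left_cancel₀ hAF
    calc x.val 0 0 * x.val 2 2 * ((x.val)⁻¹ 0 0 * (x.val)⁻¹ 2 2)
        = (x.val 0 0 * (x.val)⁻¹ 0 0) * (x.val 2 2 * (x.val)⁻¹ 2 2) := by ring
      _ = 1 := by rw [e00, e22, mul_one]
      _ = (x.val 1 1 * (x.val)⁻¹ 1 1) ^ 2 := by rw [e11]; ring
      _ = x.val 0 0 * x.val 2 2 * ((x.val)⁻¹ 1 1 ^ 2) := by rw [hcon]; ring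
  refine ⟨?_, ?_, ?_, ?_⟩ <;>
    rw [show ((x⁻¹ : GL (Fin 3) (ZMod p)) : Matrix (Fin 3) (Fin 3) (ZMod p))
        = (x.val)⁻¹ from Matrix.coe_units_inv x]
  · exact y10
  · exact y20
  · exact y21
  · exact key

lemma normalizer_carrier_eq : ((Subgroup.normalizer (E0 p : Set (GL (Fin 3) (ZMod p)))) : Set (GL (Fin 3) (ZMod p))) = T p := by
  ext x
  constructor
  · intro hx
    rw [SetLike.mem_coe, Subgroup.mem_normalizer_iff] at hx
    obtain ⟨α, γ, hα⟩ := (hx (mk 0 1)).mp ⟨0, 1, rfl⟩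
    obtain ⟨β, δ, hβ⟩ := (hx (mk 1 0)).mp ⟨1, 0, rfl⟩
    have hdet := (det_isUnit x).ne_zero
    rw [Matrix.det_fin_three] at hdet
    have hα' : x.val * mkMat 0 1 = mkMat α γ * x.val :=
      congrArg Units.val (mul_inv_eq_iff_eq_mul.mp hα)
    have hβ' : x.val * mkMat 1 0 = mkMat β δ * x.val :=
      congrArg Units.val (mul_inv_eq_iff_eq_mul.mp hβ)
    have a00 := congrFun (congrFun hα' 0) 0
    have a01 := congrFun (congrFun hα' 0) 1
    have a02 := congrFun (congrFun hα' 0) 2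
    have a11 := congrFun (congrFun hα' 1) 1
    have a12 := congrFun (congrFun hα' 1) 2
    have a22 := congrFun (congrFun hα' 2) 2
    simp [mkMat, Matrix.mul_apply, Fin.sum_univ_three, Matrix.vecHead, Matrix.vecTail]
      at a00 a01 a02 a11 a12 a22
    have b01 := congrFun (congrFun hβ' 0) 1
    have b12 := congrFun (congrFun hβ' 1) 2
    simp [mkMat, Matrix.mul_apply, Fin.sum_univ_three, Matrix.vecHead, Matrix.vecTail]
      at b01 b12
    by_cases hα0 : α = 0
    · rw [hα0] at a01 a02 a12
      have h10 : (x : Matrix (Fin 3) (Fin 3) (ZMod p)) 1 0 = 0 := by linear_combination a12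
      have hγ : γ ≠ 0 := by
        intro hγ0
        rw [hγ0] at a02
        have h00 : (x : Matrix (Fin 3) (Fin 3) (ZMod p)) 0 0 = 0 := by linear_combination a02
        exact hdet (by rw [h00, h10, a22]; ring)
      have h21 : (x : Matrix (Fin 3) (Fin 3) (ZMod p)) 2 1 = 0 := by
        have : γ * (x : Matrix (Fin 3) (Fin 3) (ZMod p)) 2 1 = 0 := by linear_combination -a01
        exact (mul_eq_zero.mp this).resolve_left hγ
      refine ⟨h10, a22, h21, ?_⟩
      linear_combination (x : Matrix (Fin 3) (Fin 3) (ZMod p)) 2 2 * b01 -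
        (x : Matrix (Fin 3) (Fin 3) (ZMod p)) 1 1 * b12 + δ * (x : Matrix (Fin 3) (Fin 3) (ZMod p)) 2 2 * h21
    · exfalso
      have h21 : (x : Matrix (Fin 3) (Fin 3) (ZMod p)) 2 1 = 0 := a11.resolve_left hα0
      have h10 : (x : Matrix (Fin 3) (Fin 3) (ZMod p)) 1 0 = 0 := by
        have : α * (x : Matrix (Fin 3) (Fin 3) (ZMod p)) 1 0 = 0 := by
          linear_combination -a00 - γ * a22
        exact (mul_eq_zero.mp this).resolve_left hα0
      have h22 : (x : Matrix (Fin 3) (Fin 3) (ZMod p)) 2 2 = 0 := by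
        have : α * (x : Matrix (Fin 3) (Fin 3) (ZMod p)) 2 2 = 0 := by
          linear_combination -a12 + h10
        exact (mul_eq_zero.mp this).resolve_left hα0
      exact hdet (by rw [h10, h21, h22, a22]; ring)
  · intro hx
    rw [SetLike.mem_coe, Subgroup.mem_normalizer_iff]
    intro n
    constructor
    · rintro ⟨a, c, rfl⟩
      exact conj_mem_E0 hx a c
    · rintro ⟨a, c, hn⟩
      have := conj_mem_E0 (inv_mem_T hx) a c
      rw [← hn] at this
      have hrw : x⁻¹ * (x * n * x⁻¹) * x⁻¹⁻¹ = n := by group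
      rwa [hrw] at this

lemma mem_normalizer_iff_T (x : GL (Fin 3) (ZMod p)) :
    x ∈ (Subgroup.normalizer (E0 p : Set (GL (Fin 3) (ZMod p)))) ↔ x ∈ T p := by
  rw [← SetLike.mem_coe, normalizer_carrier_eq]

def tmat (a d : (ZMod p)ˣ) (b c e : ZMod p) : Matrix (Fin 3) (Fin 3) (ZMod p) :=
  !![(a : ZMod p), b, c; 0, (d : ZMod p), e; 0, 0, ((d^2 * a⁻¹ : (ZMod p)ˣ) : ZMod p)]

lemma tmat_det_ne_zero (a d : (ZMod p)ˣ) (b c e : ZMod p) :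
    (tmat a d b c e).det ≠ 0 := by
  have hdet : (tmat a d b c e).det =
      (a : ZMod p) * (d : ZMod p) * ((d^2 * a⁻¹ : (ZMod p)ˣ) : ZMod p) := by
    rw [Matrix.det_fin_three]
    show (a : ZMod p) * (d : ZMod p) * ((d^2 * a⁻¹ : (ZMod p)ˣ) : ZMod p)
        - (a : ZMod p) * e * 0 - b * 0 * ((d^2 * a⁻¹ : (ZMod p)ˣ) : ZMod p)
        + b * e * 0 + c * 0 * 0 - c * (d : ZMod p) * 0 = _
    ring
  rw [hdet]
  exact mul_ne_zero (mul_ne_zero a.ne_zero d.ne_zero) (d^2 * a⁻¹).ne_zero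

def tmk (a d : (ZMod p)ˣ) (b c e : ZMod p) : GL (Fin 3) (ZMod p) :=
  Matrix.GeneralLinearGroup.mkOfDetNeZero _ (tmat_det_ne_zero a d b c e)

lemma tmk_val (a d : (ZMod p)ˣ) (b c e : ZMod p) :
    (tmk a d b c e : Matrix (Fin 3) (Fin 3) (ZMod p)) = tmat a d b c e := rfl

lemma tmk_mem_T (a d : (ZMod p)ˣ) (b c e : ZMod p) : tmk a d b c e ∈ T p := by
  refine ⟨rfl, rfl, rfl, ?_⟩
  show (a : ZMod p) * ((d^2 * a⁻¹ : (ZMod p)ˣ) : ZMod p) = (d : ZMod p) ^ 2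
  rw [Units.val_mul, Units.val_pow_eq_pow_val, Units.val_inv_eq_inv_val]
  field_simp

noncomputable def NEquiv :
    ((Subgroup.normalizer (E0 p : Set (GL (Fin 3) (ZMod p))))) ≃ ((ZMod p)ˣ × (ZMod p)ˣ × ZMod p × ZMod p × ZMod p) where
  toFun x :=
    ⟨Units.mk0 (x.1.val 0 0) (diag_ne_zero ((mem_normalizer_iff_T x.1).mp x.2)).1,
     Units.mk0 (x.1.val 1 1) (diag_ne_zero ((mem_normalizer_iff_T x.1).mp x.2)).2.1,
     x.1.val 0 1, x.1.val 0 2, x.1.val 1 2⟩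
  invFun q := ⟨tmk q.1 q.2.1 q.2.2.1 q.2.2.2.1 q.2.2.2.2,
    (mem_normalizer_iff_T _).mpr (tmk_mem_T _ _ _ _ _)⟩
  left_inv := by
    rintro ⟨x, hx⟩
    obtain ⟨h10, h20, h21, hcon⟩ := (mem_normalizer_iff_T x).mp hx
    obtain ⟨hA, hD, hF⟩ := diag_ne_zero ⟨h10, h20, h21, hcon⟩
    rw [show (x : Matrix (Fin 3) (Fin 3) (ZMod p)) = x.val from rfl] at h10 h20 h21 hcon
    apply Subtype.ext
    apply Units.ext
    show tmat _ _ _ _ _ = x.val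
    ext i j
    fin_cases i <;> fin_cases j
    · rfl
    · rfl
    · rfl
    · show (0 : ZMod p) = x.val 1 0; exact h10.symm
    · rfl
    · rfl
    · show (0 : ZMod p) = x.val 2 0; exact h20.symm
    · show (0 : ZMod p) = x.val 2 1; exact h21.symm
    · show ((Units.mk0 (x.val 1 1) hD ^ 2 * (Units.mk0 (x.val 0 0) hA)⁻¹ :
          (ZMod p)ˣ) : ZMod p) = x.val 2 2
      rw [Units.val_mul, Units.val_pow_eq_pow_val, Units.val_inv_eq_inv_val]
      show x.val 1 1 ^ 2 * (x.val 0 0)⁻¹ = x.val 2 2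
      field_simp
      linear_combination -hcon
  right_inv := by
    rintro ⟨a, d, b, c, e⟩
    refine Prod.ext ?_ (Prod.ext ?_ (Prod.ext rfl (Prod.ext rfl rfl)))
    · exact Units.ext rfl
    · exact Units.ext rfl

lemma card_normalizer : Nat.card ((Subgroup.normalizer (E0 p : Set (GL (Fin 3) (ZMod p))))) = p ^ 3 * (p - 1) ^ 2 := by
  rw [Nat.card_congr (NEquiv (p := p))]
  have hu : Nat.card ((ZMod p)ˣ) = p - 1 := by
    rw [Nat.card_eq_fintype_card, ZMod.card_units_eq_totient, Nat.totient_prime Fact.out]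
  rw [Nat.card_prod, Nat.card_prod, Nat.card_prod, Nat.card_prod, hu, Nat.card_zmod]
  obtain ⟨q, rfl⟩ : ∃ q, p = q + 1 := ⟨p - 1, by have := (Fact.out : p.Prime).two_le; omega⟩
  simp only [Nat.add_sub_cancel]
  ring

section Conj
variable {G : Type*} [Group G]

lemma conj_map_mul (a b : G) (H : Subgroup G) :
    Subgroup.map (MulAut.conj (a * b)).toMonoidHom H =
      Subgroup.map (MulAut.conj a).toMonoidHom (Subgroup.map (MulAut.conj b).toMonoidHom H) := by
  rw [Subgroup.map_map]
  congr 1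
  ext n
  simp [MulAut.conj_apply, mul_assoc]

lemma map_conj_self_iff (H : Subgroup G) (x : G) :
    Subgroup.map (MulAut.conj x).toMonoidHom H = H ↔ x ∈ (Subgroup.normalizer (H : Set G)) := by
  rw [Subgroup.mem_normalizer_iff]
  constructor
  · intro hmap n
    constructor
    · intro hn
      rw [← hmap]
      exact ⟨n, hn, rfl⟩
    · intro hn
      rw [← hmap, Subgroup.mem_map] at hn
      obtain ⟨m, hm, hmx⟩ := hn
      have : m = n := by
        have := hmx
        simp only [MulEquiv.coe_toMonoidHom, MulAut.conj_apply] at this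
        have h2 : x * m * x⁻¹ = x * n * x⁻¹ := this
        group at h2
        exact mul_left_cancel (mul_right_cancel h2)
      rwa [← this]
  · intro hiff
    ext n
    rw [Subgroup.mem_map]
    constructor
    · rintro ⟨m, hm, rfl⟩
      exact (hiff m).mp hm
    · intro hn
      refine ⟨x⁻¹ * n * x, ?_, ?_⟩
      · apply (hiff _).mpr
        have : x * (x⁻¹ * n * x) * x⁻¹ = n := by group
        rwa [this]
      · simp only [MulEquiv.coe_toMonoidHom, MulAut.conj_apply]
        group

noncomputable def conjOrbitEquiv (H : Subgroup G) :
    (G ⧸ (Subgroup.normalizer (H : Set G))) ≃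
      {K : Subgroup G // ∃ a : G, Subgroup.map (MulAut.conj a).toMonoidHom H = K} := by
  refine Equiv.ofBijective (fun q => Quotient.liftOn' q
    (fun a => ⟨Subgroup.map (MulAut.conj a).toMonoidHom H, a, rfl⟩) ?_) ⟨?_, ?_⟩
  · intro a b hab
    rw [QuotientGroup.leftRel_apply] at hab
    have h1 : Subgroup.map (MulAut.conj (a⁻¹ * b)).toMonoidHom H = H :=
      (map_conj_self_iff H _).mpr hab
    have h2 : Subgroup.map (MulAut.conj b).toMonoidHom H =
        Subgroup.map (MulAut.conj a).toMonoidHom H := by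
      have : b = a * (a⁻¹ * b) := by group
      rw [this, conj_map_mul, h1]
    exact Subtype.ext h2.symm
  · intro q1 q2
    induction q1 using Quotient.ind
    induction q2 using Quotient.ind
    rename_i a b
    intro hab
    have h2 : Subgroup.map (MulAut.conj a).toMonoidHom H =
        Subgroup.map (MulAut.conj b).toMonoidHom H := congrArg Subtype.val hab
    apply Quotient.sound'
    rw [QuotientGroup.leftRel_apply]
    apply (map_conj_self_iff H _).mp
    rw [conj_map_mul, ← h2, ← conj_map_mul]
    exact (map_conj_self_iff H _).mpr (by rw [inv_mul_cancel]; exact (Subgroup.normalizer (H : Set G)).one_mem)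
  · rintro ⟨K, a, rfl⟩
    exact ⟨QuotientGroup.mk a, rfl⟩

lemma card_conjugates (H : Subgroup G) :
    Nat.card {K : Subgroup G // ∃ a : G, Subgroup.map (MulAut.conj a).toMonoidHom H = K} =
      (Subgroup.normalizer (H : Set G)).index := by
  rw [← Nat.card_congr (conjOrbitEquiv H)]
  rfl

end Conj

lemma normalizer_index (hp3 : 3 ≤ p) :
    (Subgroup.normalizer (E0 p : Set (GL (Fin 3) (ZMod p)))).index = (p ^ 2 + p + 1) * (p + 1) * (p - 1) := by
  have hmul := Subgroup.index_mul_card ((Subgroup.normalizer (E0 p : Set (GL (Fin 3) (ZMod p)))))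
  rw [card_normalizer] at hmul
  have hG : Nat.card (GL (Fin 3) (ZMod p)) =
      (p ^ 3 - p ^ 0) * ((p ^ 3 - p ^ 1) * (p ^ 3 - p ^ 2)) := by
    rw [Matrix.card_GL_field, ZMod.card, Fin.prod_univ_three]
    norm_num
    ring
  rw [hG] at hmul
  obtain ⟨q, rfl⟩ : ∃ q, p = q + 1 := ⟨p - 1, by omega⟩
  have hq : 2 ≤ q := by omega
  have e0 : (q+1) ^ 3 - (q+1) ^ 0 = ((q+1) ^ 2 + (q+1) + 1) * q := by
    have h : (q+1) ^ 3 = ((q+1) ^ 2 + (q+1) + 1) * q + (q+1) ^ 0 := by ring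
    rw [h, Nat.add_sub_cancel]
  have e1 : (q+1) ^ 3 - (q+1) ^ 1 = (q+1) * (q * (q+2)) := by
    have h : (q+1) ^ 3 = (q+1) * (q * (q+2)) + (q+1) ^ 1 := by ring
    rw [h, Nat.add_sub_cancel]
  have e2 : (q+1) ^ 3 - (q+1) ^ 2 = (q+1) ^ 2 * q := by
    have h : (q+1) ^ 3 = (q+1) ^ 2 * q + (q+1) ^ 2 := by ring
    rw [h, Nat.add_sub_cancel]
  rw [e0, e1, e2] at hmul
  simp only [Nat.add_sub_cancel] at hmul ⊢
  apply Nat.eq_of_mul_eq_mul_right (show 0 < (q+1) ^ 3 * q ^ 2 by positivity)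
  rw [hmul]
  ring

end GL3HAux

open GL3HAux

/-- For a prime `p ≥ 3`, the subgroup `E ⊆ GL_3(𝔽_p)` generated by
`g = I + E₁₂ + E₂₃` and `h = I + E₁₃` is elementary abelian of order `p²`; its normalizer
is the set of invertible upper-triangular matrices `(a b c; 0 d e; 0 0 f)` with `af = d²`,
of order `p³(p-1)²`; and `E` has exactly `(p²+p+1)(p+1)(p-1)` conjugates in `GL_3(𝔽_p)`. -/
theorem GL3_heisenberg_elementary_abelian (p : ℕ) [Fact p.Prime] (hp3 : 3 ≤ p)
    (g h : GL (Fin 3) (ZMod p))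
    (hg : (g : Matrix (Fin 3) (Fin 3) (ZMod p)) = !![1, 1, 0; 0, 1, 1; 0, 0, 1])
    (hh : (h : Matrix (Fin 3) (Fin 3) (ZMod p)) = !![1, 0, 1; 0, 1, 0; 0, 0, 1]) :
    ∀ E : Subgroup (GL (Fin 3) (ZMod p)), E = Subgroup.closure {g, h} →
      (∀ x ∈ E, ∀ y ∈ E, x * y = y * x) ∧
      (∀ x ∈ E, x ^ p = 1) ∧
      Nat.card E = p ^ 2 ∧
      (Subgroup.normalizer (E : Set (GL (Fin 3) (ZMod p))) : Set (GL (Fin 3) (ZMod p))) =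
        {x : GL (Fin 3) (ZMod p) |
          (x : Matrix (Fin 3) (Fin 3) (ZMod p)) 1 0 = 0 ∧
          (x : Matrix (Fin 3) (Fin 3) (ZMod p)) 2 0 = 0 ∧
          (x : Matrix (Fin 3) (Fin 3) (ZMod p)) 2 1 = 0 ∧
          (x : Matrix (Fin 3) (Fin 3) (ZMod p)) 0 0 *
              (x : Matrix (Fin 3) (Fin 3) (ZMod p)) 2 2 =
            (x : Matrix (Fin 3) (Fin 3) (ZMod p)) 1 1 ^ 2} ∧
      Nat.card (Subgroup.normalizer (E : Set (GL (Fin 3) (ZMod p)))) = p ^ 3 * (p - 1) ^ 2 ∧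
      Nat.card {K : Subgroup (GL (Fin 3) (ZMod p)) //
          ∃ a : GL (Fin 3) (ZMod p), Subgroup.map (MulAut.conj a).toMonoidHom E = K} =
        (p ^ 2 + p + 1) * (p + 1) * (p - 1) := by
  intro E hE
  have hE0 : E = E0 p := by rw [hE, closure_eq_E0 hg hh]
  subst hE0
  refine ⟨?_, ?_, card_E0, normalizer_carrier_eq, card_normalizer, ?_⟩
  · rintro x ⟨a, c, rfl⟩ y ⟨a', c', rfl⟩
    exact mk_comm a c a' c'
  · rintro x ⟨a, c, rfl⟩
    exact mk_pow_p hp3 a c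
  · rw [card_conjugates, normalizer_index hp3]
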